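/- For Weyl states, the Cerf–Adami criterion is equivalent to the PPT criterion: a two-qubit Weyl state ρ satisfies 2ρ ≤ I₄ (all eigenvalues ≤ 1/2) if and only if ρ is separable. -/

import Mathlib

open Matrix Kronecker Complex
open scoped ComplexOrder

noncomputable section

/-- Pauli matrices -/
def pauli : Fin 3 → Matrix (Fin 2) (Fin 2) ℂ
  | 0 => !![0, 1; 1, 0]
  | 1 => !![0, -Complex.I; Complex.I, 0]
  | 2 => !![1, 0; 0, -1]

/-- The singlet Bell state |Ψ⁻⟩ = (|01⟩ - |10⟩)/√2 as a vector in ℂ²⊗ℂ². -/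
def psiMinus : Fin 2 × Fin 2 → ℂ :=
  fun p => if p = (0, 1) then (1 / Real.sqrt 2 : ℝ) else
           if p = (1, 0) then (-(1 / Real.sqrt 2) : ℝ) else 0

/-- Outer product |v⟩⟨v|. -/
def outer {n : Type*} (v : n → ℂ) : Matrix n n ℂ :=
  fun i j => v i * starRingEnd ℂ (v j)

/-- The Werner state ρ_W(α) = α|Ψ⁻⟩⟨Ψ⁻| + (1-α)/4 · I₄. -/
def wernerState (α : ℝ) : Matrix (Fin 2 × Fin 2) (Fin 2 × Fin 2) ℂ :=
  (α : ℂ) • outer psiMinus + (((1 - α) / 4 : ℝ) : ℂ) • (1 : Matrix (Fin 2 × Fin 2) (Fin 2 × Fin 2) ℂ)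

/-- Partial trace over the first subsystem. -/
def ptrA {m n : Type*} [Fintype m] (ρ : Matrix (m × n) (m × n) ℂ) : Matrix n n ℂ :=
  fun i j => ∑ k, ρ (k, i) (k, j)

/-- Partial trace over the second subsystem. -/
def ptrB {m n : Type*} [Fintype n] (ρ : Matrix (m × n) (m × n) ℂ) : Matrix m m ℂ :=
  fun i j => ∑ k, ρ (i, k) (j, k)

/-- Partial transpose on the second subsystem. -/
def ptransposeB {m n : Type*} (ρ : Matrix (m × n) (m × n) ℂ) : Matrix (m × n) (m × n) ℂ :=
  fun p q => ρ (p.1, q.2) (q.1, p.2)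

/-- A density operator: positive semi-definite with unit trace. -/
def IsDensityOp {n : Type*} [Fintype n] [DecidableEq n] (ρ : Matrix n n ℂ) : Prop :=
  ρ.PosSemidef ∧ ρ.trace = 1

/-- Separability of a bipartite state: a convex combination of product density operators. -/
def IsSepState {m n : Type*} [Fintype m] [Fintype n] [DecidableEq m] [DecidableEq n]
    (ρ : Matrix (m × n) (m × n) ℂ) : Prop :=
  ∃ (k : ℕ) (p : Fin k → ℝ) (A : Fin k → Matrix m m ℂ) (B : Fin k → Matrix n n ℂ),
    (∀ i, 0 ≤ p i) ∧ (∑ i, p i = 1) ∧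
    (∀ i, IsDensityOp (A i)) ∧ (∀ i, IsDensityOp (B i)) ∧
    ρ = ∑ i, ((p i : ℂ)) • (A i ⊗ₖ B i)

/-- A Hermitian matrix has a negative eigenvalue. -/
def HasNegEigenvalue {n : Type*} [Fintype n] [DecidableEq n] (M : Matrix n n ℂ) : Prop :=
  ∃ (h : M.IsHermitian) (i : n), h.eigenvalues i < 0

/-- Von Neumann entropy (base-2) of a matrix, via its eigenvalues (0 for non-Hermitian input). -/
def vNEntropy {n : Type*} [Fintype n] [DecidableEq n] (ρ : Matrix n n ℂ) : ℝ :=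
  if h : ρ.IsHermitian then ∑ i, -(h.eigenvalues i) * Real.logb 2 (h.eigenvalues i) else 0


/-- Weyl (locally maximally mixed) two-qubit state with correlation coefficients t. -/
def weylState (t : Fin 3 → ℝ) : Matrix (Fin 2 × Fin 2) (Fin 2 × Fin 2) ℂ :=
  (1/4 : ℂ) • ((1 : Matrix (Fin 2 × Fin 2) (Fin 2 × Fin 2) ℂ) +
    ∑ i, (t i : ℂ) • (pauli i ⊗ₖ pauli i))

/-- Matrix function via the continuous functional calculus (0 for non-Hermitian input). -/
def mfun {n : Type*} [Fintype n] [DecidableEq n] (f : ℝ → ℝ) (M : Matrix n n ℂ) :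
    Matrix n n ℂ :=
  if h : M.IsHermitian then h.cfc f else 0

/-- Base-2 logarithm extended by 0 outside the support. -/
def log2supp (x : ℝ) : ℝ := if 0 < x then Real.logb 2 x else 0

/-- The Cerf–Adami conditional amplitude operator ρ_{A|B} = exp₂(log₂ ρ - log₂ (1 ⊗ ρ_B)). -/
def condAmpOp {m n : Type*} [Fintype m] [Fintype n] [DecidableEq m] [DecidableEq n]
    (ρ : Matrix (m × n) (m × n) ℂ) : Matrix (m × n) (m × n) ℂ :=
  mfun (fun x => (2 : ℝ) ^ x)
    (mfun log2supp ρ - mfun log2supp ((1 : Matrix m m ℂ) ⊗ₖ ptrA ρ))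

/-- The spin-flipped state σ_y⊗σ_y ρ* σ_y⊗σ_y. -/
def spinFlip (ρ : Matrix (Fin 2 × Fin 2) (Fin 2 × Fin 2) ℂ) :
    Matrix (Fin 2 × Fin 2) (Fin 2 × Fin 2) ℂ :=
  (pauli 1 ⊗ₖ pauli 1) * ρ.map (starRingEnd ℂ) * (pauli 1 ⊗ₖ pauli 1)

/-- The Wootters concurrence of a two-qubit state ρ equals c: the λᵢ are the decreasingly
ordered (nonnegative) eigenvalues of ρ ρ̃ and c = max{0, √λ₁ - √λ₂ - √λ₃ - √λ₄}. -/
def ConcurrenceEq (ρ : Matrix (Fin 2 × Fin 2) (Fin 2 × Fin 2) ℂ) (c : ℝ) : Prop :=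
  ∃ l : Fin 4 → ℝ, Antitone l ∧ (∀ i, 0 ≤ l i) ∧
    (ρ * spinFlip ρ).charpoly = ∏ i : Fin 4, (Polynomial.X - Polynomial.C ((l i : ℝ) : ℂ)) ∧
    c = max 0 (Real.sqrt (l 0) - Real.sqrt (l 1) - Real.sqrt (l 2) - Real.sqrt (l 3))

/-- The state |ψ_θ⟩ = sin θ |01⟩ + cos θ |10⟩. -/
def psiTheta (θ : ℝ) : Fin 2 × Fin 2 → ℂ :=
  fun p => if p = (0, 1) then (Real.sin θ : ℝ) else
           if p = (1, 0) then (Real.cos θ : ℝ) else 0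

/-- The state ρ_top = (|00⟩⟨00| + |11⟩⟨11|)/2. -/
def rhoTop : Matrix (Fin 2 × Fin 2) (Fin 2 × Fin 2) ℂ :=
  Matrix.diagonal (fun p => if p.1 = p.2 then (1/2 : ℂ) else 0)

/-- The Gisin state ρ_G(λ,θ) = λ|ψ_θ⟩⟨ψ_θ| + (1-λ) ρ_top. -/
def gisinState (lam θ : ℝ) : Matrix (Fin 2 × Fin 2) (Fin 2 × Fin 2) ℂ :=
  (lam : ℂ) • outer (psiTheta θ) + ((1 - lam : ℝ) : ℂ) • rhoTop

/-- The Bell state |Ψ⁺⟩ = (|01⟩ + |10⟩)/√2. -/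
def psiPlus : Fin 2 × Fin 2 → ℂ :=
  fun p => if p = (0, 1) then (1 / Real.sqrt 2 : ℝ) else
           if p = (1, 0) then (1 / Real.sqrt 2 : ℝ) else 0

/-- The entanglement witness W = (1/(2√3))(I + ∑ σₙ⊗σₙ). -/
def witnessW : Matrix (Fin 2 × Fin 2) (Fin 2 × Fin 2) ℂ :=
  ((1 / (2 * Real.sqrt 3) : ℝ) : ℂ) •
    ((1 : Matrix (Fin 2 × Fin 2) (Fin 2 × Fin 2) ℂ) + ∑ i, pauli i ⊗ₖ pauli i)

set_option linter.unusedSectionVars false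

section AuxGeneric

variable {n m : Type*} [Fintype n] [DecidableEq n] [Fintype m] [DecidableEq m]

lemma outer_posSemidef (v : n → ℂ) : (outer v).PosSemidef := by
  refine Matrix.PosSemidef.of_dotProduct_mulVec_nonneg ?_ ?_
  · ext i j
    simp [outer, Matrix.conjTranspose_apply, mul_comm]
  · intro x
    have : (star x) ⬝ᵥ ((outer v) *ᵥ x) =
        (∑ i, starRingEnd ℂ (x i) * v i) * (∑ j, starRingEnd ℂ (v j) * x j) := by
      simp [dotProduct, Matrix.mulVec, outer, Finset.sum_mul, Finset.mul_sum]
      ring_nf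
      rw [Finset.sum_comm]
    rw [this]
    have h2 : (∑ i, starRingEnd ℂ (x i) * v i) = starRingEnd ℂ (∑ j, starRingEnd ℂ (v j) * x j) := by
      rw [map_sum]; congr 1; ext j; simp [mul_comm]
    rw [h2, ← Complex.normSq_eq_conj_mul_self]
    exact_mod_cast Complex.normSq_nonneg _

lemma trace_outer (v : n → ℂ) : (outer v).trace = ∑ i, v i * starRingEnd ℂ (v i) := by
  simp [Matrix.trace, Matrix.diag, outer]

lemma sum_eigenvalues_eq_trace {A : Matrix n n ℂ} (hA : A.IsHermitian) :
    A.trace = ((∑ i, hA.eigenvalues i : ℝ) : ℂ) := by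
  conv_lhs => rw [hA.spectral_theorem, Unitary.conjStarAlgAut_apply]
  rw [Matrix.trace_mul_cycle]
  have : (star (hA.eigenvectorUnitary : Matrix n n ℂ)) * (hA.eigenvectorUnitary : Matrix n n ℂ) = 1 :=
    (Unitary.mem_iff.mp hA.eigenvectorUnitary.2).1
  rw [this, one_mul, Matrix.trace_diagonal]
  push_cast
  rfl

lemma density_le_one {B : Matrix n n ℂ} (hB : IsDensityOp B) : (1 - B).PosSemidef := by
  obtain ⟨hpsd, htr⟩ := hB
  have hherm := hpsd.1
  have hev : ∀ i, hherm.eigenvalues i ≤ 1 := by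
    intro i
    have hsum : ((∑ j, hherm.eigenvalues j : ℝ) : ℂ) = 1 := by
      rw [← sum_eigenvalues_eq_trace hherm, htr]
    have hsum' : (∑ j, hherm.eigenvalues j : ℝ) = 1 := by exact_mod_cast hsum
    calc hherm.eigenvalues i ≤ ∑ j, hherm.eigenvalues j := by
          exact Finset.single_le_sum (fun j _ => hpsd.eigenvalues_nonneg j) (Finset.mem_univ i)
      _ = 1 := hsum'
  have hUU : (hherm.eigenvectorUnitary : Matrix n n ℂ) * star (hherm.eigenvectorUnitary : Matrix n n ℂ) = 1 :=
    (Unitary.mem_iff.mp hherm.eigenvectorUnitary.2).2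
  have key : 1 - B = (hherm.eigenvectorUnitary : Matrix n n ℂ) *
      Matrix.diagonal (RCLike.ofReal ∘ (fun i => 1 - hherm.eigenvalues i)) *
      (star (hherm.eigenvectorUnitary : Matrix n n ℂ)) := by
    conv_lhs => rw [hherm.spectral_theorem, Unitary.conjStarAlgAut_apply]
    have h1 : (1 : Matrix n n ℂ) = (hherm.eigenvectorUnitary : Matrix n n ℂ) * 1 *
        (star (hherm.eigenvectorUnitary : Matrix n n ℂ)) := by
      rw [mul_one, hUU]
    rw [h1, ← Matrix.sub_mul, ← Matrix.mul_sub]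
    have h2 : (fun i => (1:ℂ) - (RCLike.ofReal ∘ hherm.eigenvalues) i) =
        (RCLike.ofReal ∘ fun i => 1 - hherm.eigenvalues i) := by
      funext i; simp [RCLike.ofReal]
    rw [← Matrix.diagonal_one, Matrix.diagonal_sub, h2]
  rw [key]
  have hd : (Matrix.diagonal (RCLike.ofReal ∘ (fun i => 1 - hherm.eigenvalues i)) :
      Matrix n n ℂ).PosSemidef := by
    apply Matrix.PosSemidef.diagonal
    intro i
    simp only [Function.comp_apply, RCLike.ofReal]
    rw [Complex.le_def]
    constructor
    · simp [sub_nonneg, hev i]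
    · simp
  have h3 := hd.mul_mul_conjTranspose_same (hherm.eigenvectorUnitary : Matrix n n ℂ)
  rw [Matrix.star_eq_conjTranspose]
  exact h3

lemma kronecker_posSemidef {A : Matrix m m ℂ} {B : Matrix n n ℂ}
    (hA : A.PosSemidef) (hB : B.PosSemidef) : (Matrix.kroneckerMap (· * ·) A B).PosSemidef := by
  exact hA.kronecker hB

end AuxGeneric
section Backward

lemma posSemidef_sum {n : Type*} [Fintype n] [DecidableEq n] {k : ℕ}
    (f : Fin k → Matrix n n ℂ) (hf : ∀ i, (f i).PosSemidef) :
    (∑ i, f i).PosSemidef :=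
  Finset.sum_induction f (fun M => M.PosSemidef) (fun _ _ ha hb => ha.add hb)
    Matrix.PosSemidef.zero (fun i _ => hf i)

lemma posSemidef_real_smul {n : Type*} [Fintype n] [DecidableEq n] {c : ℝ} (hc : 0 ≤ c)
    {A : Matrix n n ℂ} (hA : A.PosSemidef) : ((c : ℂ) • A).PosSemidef := by
  refine Matrix.PosSemidef.of_dotProduct_mulVec_nonneg ?_ ?_
  · have : ((c:ℂ) • A)ᴴ = star (c:ℂ) • Aᴴ := Matrix.conjTranspose_smul (c:ℂ) A
    rw [Matrix.IsHermitian, this, hA.1]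
    simp [Complex.star_def, Complex.conj_ofReal]
  · intro x
    rw [Matrix.smul_mulVec, dotProduct_smul]
    have h0 : (0:ℂ) ≤ (c:ℂ) := by exact_mod_cast Complex.real_le_real.mpr hc
    have := hA.dotProduct_mulVec_nonneg x
    rw [smul_eq_mul]
    exact mul_nonneg h0 this

lemma sep_imp_CAO (ρ : Matrix (Fin 2 × Fin 2) (Fin 2 × Fin 2) ℂ)
    (hA : ptrB ρ = (1/2 : ℂ) • (1 : Matrix (Fin 2) (Fin 2) ℂ))
    (hB : ptrA ρ = (1/2 : ℂ) • (1 : Matrix (Fin 2) (Fin 2) ℂ))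
    (hsep : IsSepState ρ) :
    ((1 : Matrix (Fin 2 × Fin 2) (Fin 2 × Fin 2) ℂ) - (2 : ℂ) • ρ).PosSemidef := by
  obtain ⟨k, p, A, B, hp0, _hp1, hdA, hdB, hρ⟩ := hsep
  have hsA : ∀ a b : Fin 2, (∑ i, (p i : ℂ) * A i a b) = (1/2:ℂ) * (if a = b then 1 else 0) := by
    intro a b
    have h := congrFun (congrFun hA a) b
    rw [hρ] at h
    have hL : ptrB (∑ i, ((p i : ℂ)) • (A i ⊗ₖ B i)) a b = ∑ i, (p i : ℂ) * A i a b := by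
      simp only [ptrB, Matrix.sum_apply, Matrix.smul_apply, Matrix.kroneckerMap_apply,
        smul_eq_mul]
      rw [Finset.sum_comm]
      refine Finset.sum_congr rfl fun i _ => ?_
      rw [← Finset.mul_sum]
      have : (∑ m, A i a b * B i m m) = A i a b * (B i).trace := by
        simp [Matrix.trace, Matrix.diag, Finset.mul_sum, mul_add]
      rw [this, (hdB i).2, mul_one]
    rw [hL] at h
    rw [h]
    simp [Matrix.smul_apply, Matrix.one_apply]
  have hsB : ∀ c d : Fin 2, (∑ i, (p i : ℂ) * B i c d) = (1/2:ℂ) * (if c = d then 1 else 0) := by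
    intro c d
    have h := congrFun (congrFun hB c) d
    rw [hρ] at h
    have hL : ptrA (∑ i, ((p i : ℂ)) • (A i ⊗ₖ B i)) c d = ∑ i, (p i : ℂ) * B i c d := by
      simp only [ptrA, Matrix.sum_apply, Matrix.smul_apply, Matrix.kroneckerMap_apply,
        smul_eq_mul]
      rw [Finset.sum_comm]
      refine Finset.sum_congr rfl fun i _ => ?_
      rw [← Finset.mul_sum]
      have h3 : (∑ m, A i m m * B i c d) = (A i).trace * B i c d := by
        simp [Matrix.trace, Matrix.diag, Finset.sum_mul, add_mul]
      rw [h3]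
      have h4 : (A i).trace = 1 := (hdA i).2
      rw [h4, one_mul]
    rw [hL] at h
    rw [h]
    simp [Matrix.smul_apply, Matrix.one_apply]
  have key : (1 : Matrix (Fin 2 × Fin 2) (Fin 2 × Fin 2) ℂ) - (2:ℂ) • ρ =
      (∑ i, (p i : ℂ) • ((A i) ⊗ₖ (1 - B i)))
      + ∑ i, (p i : ℂ) • ((1 - A i) ⊗ₖ (B i)) := by
    rw [hρ]
    ext ⟨a,c⟩ ⟨b,d⟩
    have h1 := hsA a b
    have h2 := hsB c d
    simp only [Matrix.sub_apply, Matrix.add_apply, Matrix.sum_apply, Matrix.smul_apply,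
      Matrix.kroneckerMap_apply, Matrix.one_apply, smul_eq_mul]
    have e1 : ∑ i, (p i:ℂ) * (A i a b * ((if c = d then (1:ℂ) else 0) - B i c d)) =
        (∑ i, (p i:ℂ) * A i a b) * (if c = d then (1:ℂ) else 0)
          - ∑ i, (p i:ℂ) * (A i a b * B i c d) := by
      rw [Finset.sum_mul, ← Finset.sum_sub_distrib]
      exact Finset.sum_congr rfl fun i _ => by ring
    have e2 : ∑ i, (p i:ℂ) * (((if a = b then (1:ℂ) else 0) - A i a b) * B i c d) =
        (if a = b then (1:ℂ) else 0) * (∑ i, (p i:ℂ) * B i c d)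
          - ∑ i, (p i:ℂ) * (A i a b * B i c d) := by
      rw [Finset.mul_sum, ← Finset.sum_sub_distrib]
      exact Finset.sum_congr rfl fun i _ => by ring
    rw [e1, e2, h1, h2]
    by_cases hab : a = b <;> by_cases hcd : c = d <;>
      simp [hab, hcd, Prod.ext_iff] <;> ring
  rw [key]
  apply Matrix.PosSemidef.add
  · exact posSemidef_sum _ fun i =>
      posSemidef_real_smul (hp0 i) (kronecker_posSemidef (hdA i).1 (density_le_one (hdB i)))
  · exact posSemidef_sum _ fun i =>
      posSemidef_real_smul (hp0 i) (kronecker_posSemidef (density_le_one (hdA i)) (hdB i).1)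

end Backward
section Magic

/-- Unnormalized magic-basis matrix: columns are √2 times the magic Bell basis. -/
def magicN : Matrix (Fin 2 × Fin 2) (Fin 2 × Fin 2) ℂ :=
  fun p q =>
    if p = (0,0) then (if q = (0,0) then 1 else if q = (0,1) then Complex.I else 0)
    else if p = (0,1) then (if q = (1,0) then Complex.I else if q = (1,1) then 1 else 0)
    else if p = (1,0) then (if q = (1,0) then Complex.I else if q = (1,1) then -1 else 0)
    else (if q = (0,0) then 1 else if q = (0,1) then -Complex.I else 0)

lemma magicN_conjT_mul : (magicN)ᴴ * magicN = (2:ℂ) • 1 := by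
  ext ⟨i,j⟩ ⟨k,l⟩
  fin_cases i <;> fin_cases j <;> fin_cases k <;> fin_cases l <;>
    simp [magicN, Matrix.mul_apply, Matrix.conjTranspose_apply, Fintype.sum_prod_type,
      Fin.sum_univ_succ, Matrix.one_apply, Prod.ext_iff, Complex.ext_iff] <;> norm_num

lemma magicN_mul_conjT : magicN * (magicN)ᴴ = (2:ℂ) • 1 := by
  ext ⟨i,j⟩ ⟨k,l⟩
  fin_cases i <;> fin_cases j <;> fin_cases k <;> fin_cases l <;>
    simp [magicN, Matrix.mul_apply, Matrix.conjTranspose_apply, Fintype.sum_prod_type,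
      Fin.sum_univ_succ, Matrix.one_apply, Prod.ext_iff, Complex.ext_iff] <;> norm_num

/-- The quadratic "concurrence" form of a vector expressed in the magic basis. -/
lemma magicN_quad (μ : Fin 2 × Fin 2 → ℂ) :
    (magicN *ᵥ μ) (0,0) * (magicN *ᵥ μ) (1,1) - (magicN *ᵥ μ) (0,1) * (magicN *ᵥ μ) (1,0)
      = ∑ j, μ j ^ 2 := by
  simp only [Matrix.mulVec, dotProduct, Fintype.sum_prod_type, Fin.sum_univ_succ,
    Fin.sum_univ_zero]
  simp [magicN, Prod.ext_iff]
  ring_nf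
  simp [Complex.I_sq]

end Magic
section Realness

set_option maxHeartbeats 2000000 in
lemma magic_real (ρ : Matrix (Fin 2 × Fin 2) (Fin 2 × Fin 2) ℂ) (hherm : ρ.IsHermitian)
    (hA : ptrB ρ = (1/2 : ℂ) • (1 : Matrix (Fin 2) (Fin 2) ℂ))
    (hB : ptrA ρ = (1/2 : ℂ) • (1 : Matrix (Fin 2) (Fin 2) ℂ)) :
    ∀ k l, (((magicN)ᴴ * ρ * magicN) k l).im = 0 := by
  have hm : ∀ p q, ρ p q = starRingEnd ℂ (ρ q p) := by
    intro p q
    conv_lhs => rw [← hherm]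
    rfl
  have hre : ∀ p q : Fin 2 × Fin 2, (ρ p q).re = (ρ q p).re := by
    intro p q; rw [hm p q]; simp
  have him : ∀ p q : Fin 2 × Fin 2, (ρ p q).im = -(ρ q p).im := by
    intro p q; rw [hm p q]; simp
  have eB : ∀ a b : Fin 2, ρ (a,0) (b,0) + ρ (a,1) (b,1)
      = ((1/2 : ℂ) • (1 : Matrix (Fin 2) (Fin 2) ℂ)) a b := by
    intro a b
    have h := congrFun (congrFun hA a) b
    rw [show ptrB ρ a b = ∑ k, ρ (a,k) (b,k) from rfl, Fin.sum_univ_two] at h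
    exact h
  have eA : ∀ a b : Fin 2, ρ (0,a) (0,b) + ρ (1,a) (1,b)
      = ((1/2 : ℂ) • (1 : Matrix (Fin 2) (Fin 2) ℂ)) a b := by
    intro a b
    have h := congrFun (congrFun hB a) b
    rw [show ptrA ρ a b = ∑ k, ρ (k,a) (k,b) from rfl, Fin.sum_univ_two] at h
    exact h
  have hB00 : ((ρ (0,0) (0,0)).re + (ρ (0,1) (0,1)).re = 1/2) ∧ ((ρ (0,0) (0,0)).im + (ρ (0,1) (0,1)).im = 0) := by
    have h := eB 0 0
    refine ⟨?_, ?_⟩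
    · have := congrArg Complex.re h; simpa [Matrix.one_apply] using this
    · have := congrArg Complex.im h; simpa [Matrix.one_apply] using this
  have hB01 : ((ρ (0,0) (1,0)).re + (ρ (0,1) (1,1)).re = 0) ∧ ((ρ (0,0) (1,0)).im + (ρ (0,1) (1,1)).im = 0) := by
    have h := eB 0 1
    refine ⟨?_, ?_⟩
    · have := congrArg Complex.re h; simpa [Matrix.one_apply] using this
    · have := congrArg Complex.im h; simpa [Matrix.one_apply] using this
  have hB10 : ((ρ (1,0) (0,0)).re + (ρ (1,1) (0,1)).re = 0) ∧ ((ρ (1,0) (0,0)).im + (ρ (1,1) (0,1)).im = 0) := by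
    have h := eB 1 0
    refine ⟨?_, ?_⟩
    · have := congrArg Complex.re h; simpa [Matrix.one_apply] using this
    · have := congrArg Complex.im h; simpa [Matrix.one_apply] using this
  have hB11 : ((ρ (1,0) (1,0)).re + (ρ (1,1) (1,1)).re = 1/2) ∧ ((ρ (1,0) (1,0)).im + (ρ (1,1) (1,1)).im = 0) := by
    have h := eB 1 1
    refine ⟨?_, ?_⟩
    · have := congrArg Complex.re h; simpa [Matrix.one_apply] using this
    · have := congrArg Complex.im h; simpa [Matrix.one_apply] using this
  have hA00 : ((ρ (0,0) (0,0)).re + (ρ (1,0) (1,0)).re = 1/2) ∧ ((ρ (0,0) (0,0)).im + (ρ (1,0) (1,0)).im = 0) := by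
    have h := eA 0 0
    refine ⟨?_, ?_⟩
    · have := congrArg Complex.re h; simpa [Matrix.one_apply] using this
    · have := congrArg Complex.im h; simpa [Matrix.one_apply] using this
  have hA01 : ((ρ (0,0) (0,1)).re + (ρ (1,0) (1,1)).re = 0) ∧ ((ρ (0,0) (0,1)).im + (ρ (1,0) (1,1)).im = 0) := by
    have h := eA 0 1
    refine ⟨?_, ?_⟩
    · have := congrArg Complex.re h; simpa [Matrix.one_apply] using this
    · have := congrArg Complex.im h; simpa [Matrix.one_apply] using this
  have hA10 : ((ρ (0,1) (0,0)).re + (ρ (1,1) (1,0)).re = 0) ∧ ((ρ (0,1) (0,0)).im + (ρ (1,1) (1,0)).im = 0) := by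
    have h := eA 1 0
    refine ⟨?_, ?_⟩
    · have := congrArg Complex.re h; simpa [Matrix.one_apply] using this
    · have := congrArg Complex.im h; simpa [Matrix.one_apply] using this
  have hA11 : ((ρ (0,1) (0,1)).re + (ρ (1,1) (1,1)).re = 1/2) ∧ ((ρ (0,1) (0,1)).im + (ρ (1,1) (1,1)).im = 0) := by
    have h := eA 1 1
    refine ⟨?_, ?_⟩
    · have := congrArg Complex.re h; simpa [Matrix.one_apply] using this
    · have := congrArg Complex.im h; simpa [Matrix.one_apply] using this
  intro k l
  obtain ⟨k1, k2⟩ := k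
  obtain ⟨l1, l2⟩ := l
  fin_cases k1 <;> fin_cases k2 <;> fin_cases l1 <;> fin_cases l2 <;>
  · simp only [Matrix.mul_apply, Matrix.conjTranspose_apply, Fintype.sum_prod_type,
      Fin.sum_univ_two, magicN, Prod.mk.injEq]
    norm_num [-Prod.mk_zero_zero, -Prod.mk_one_one, Complex.add_im, Complex.add_re,
      Complex.mul_im, Complex.mul_re]
    linarith [hre (0,0) (0,0), him (0,0) (0,0), hre (0,0) (0,1), him (0,0) (0,1), hre (0,0) (1,0), him (0,0) (1,0), hre (0,0) (1,1), him (0,0) (1,1), hre (0,1) (0,0), him (0,1) (0,0), hre (0,1) (0,1), him (0,1) (0,1), hre (0,1) (1,0), him (0,1) (1,0), hre (0,1) (1,1), him (0,1) (1,1), hre (1,0) (0,0), him (1,0) (0,0), hre (1,0) (0,1), him (1,0) (0,1), hre (1,0) (1,0), him (1,0) (1,0), hre (1,0) (1,1), him (1,0) (1,1), hre (1,1) (0,0), him (1,1) (0,0), hre (1,1) (0,1), him (1,1) (0,1), hre (1,1) (1,0), him (1,1) (1,0), hre (1,1) (1,1), him (1,1) (1,1), hB00.1, hB00.2, hB01.1,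 hB01.2, hB10.1, hB10.2, hB11.1, hB11.2, hA00.1, hA00.2, hA01.1, hA01.2, hA10.1, hA10.2, hA11.1, hA11.2]

end Realness
section Spectral

lemma sum_eigenvalues_eq_trace_real {n : Type*} [Fintype n] [DecidableEq n]
    {A : Matrix n n ℝ} (hA : A.IsHermitian) :
    A.trace = ∑ i, hA.eigenvalues i := by
  conv_lhs => rw [hA.spectral_theorem, Unitary.conjStarAlgAut_apply]
  rw [Matrix.trace_mul_cycle]
  have h1 : (star (hA.eigenvectorUnitary : Matrix n n ℝ)) * (hA.eigenvectorUnitary : Matrix n n ℝ) = 1 :=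
    (Unitary.mem_iff.mp hA.eigenvectorUnitary.2).1
  rw [h1, one_mul, Matrix.trace_diagonal]
  rfl

lemma spectral_package (ρ : Matrix (Fin 2 × Fin 2) (Fin 2 × Fin 2) ℂ) (hρ : IsDensityOp ρ)
    (hA : ptrB ρ = (1/2 : ℂ) • (1 : Matrix (Fin 2) (Fin 2) ℂ))
    (hB : ptrA ρ = (1/2 : ℂ) • (1 : Matrix (Fin 2) (Fin 2) ℂ))
    (hCAO : ((1 : Matrix (Fin 2 × Fin 2) (Fin 2 × Fin 2) ℂ) - (2 : ℂ) • ρ).PosSemidef) :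
    ∃ (p : Fin 2 × Fin 2 → ℝ) (U : Matrix (Fin 2 × Fin 2) (Fin 2 × Fin 2) ℝ),
      (∀ k, 0 ≤ p k) ∧ (∀ k, p k ≤ 1/2) ∧ (∑ k, p k = 1) ∧
      (∀ k l, ∑ j, U j k * U j l = if k = l then 1 else 0) ∧
      ρ = (1/2 : ℂ) • ((magicN * U.map Complex.ofReal) *
            Matrix.diagonal (fun k => (p k : ℂ)) * (magicN * U.map Complex.ofReal)ᴴ) := by
  classical
  set C : Matrix (Fin 2 × Fin 2) (Fin 2 × Fin 2) ℂ := (magicN)ᴴ * ρ * magicN with hCdef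
  have him : ∀ k l, (C k l).im = 0 := magic_real ρ hρ.1.1 hA hB
  set r : Matrix (Fin 2 × Fin 2) (Fin 2 × Fin 2) ℝ := fun k l => (C k l).re / 2 with hrdef
  have hC : C = (2:ℂ) • r.map Complex.ofReal := by
    ext k l
    apply Complex.ext
    · simp only [Matrix.smul_apply, Matrix.map_apply]; simp [hrdef]; ring
    · simp only [Matrix.smul_apply, Matrix.map_apply]; simp [hrdef, him k l]
  have hCherm : C.IsHermitian := by
    have h := hρ.1.1
    unfold Matrix.IsHermitian
    rw [hCdef]
    rw [Matrix.conjTranspose_mul, Matrix.conjTranspose_mul, Matrix.conjTranspose_conjTranspose, h]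
    rw [Matrix.mul_assoc]
  have hrherm : r.IsHermitian := by
    ext k l
    have h := congrFun (congrFun hCherm.symm k) l
    rw [Matrix.conjTranspose_apply] at h
    rw [Matrix.conjTranspose_apply, star_trivial]
    simp only [hrdef]
    rw [show C k l = starRingEnd ℂ (C l k) from h.symm ▸ rfl]
    simp
  have hCpsd : C.PosSemidef := hρ.1.conjTranspose_mul_mul_same magicN
  have hDeq : (magicN)ᴴ * ((1 : Matrix (Fin 2 × Fin 2) (Fin 2 × Fin 2) ℂ) - (2:ℂ) • ρ) * magicN
      = (2:ℂ) • (1 : Matrix (Fin 2 × Fin 2) (Fin 2 × Fin 2) ℂ) - (2:ℂ) • C := by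
    rw [Matrix.mul_sub, Matrix.sub_mul, Matrix.mul_one, magicN_conjT_mul]
    congr 1
    rw [Matrix.mul_smul, Matrix.smul_mul, hCdef]
  have hDpsd : ((2:ℂ) • (1 : Matrix (Fin 2 × Fin 2) (Fin 2 × Fin 2) ℂ) - (2:ℂ) • C).PosSemidef := by
    rw [← hDeq]
    exact hCAO.conjTranspose_mul_mul_same magicN
  set U : Matrix (Fin 2 × Fin 2) (Fin 2 × Fin 2) ℝ :=
    (hrherm.eigenvectorUnitary : Matrix (Fin 2 × Fin 2) (Fin 2 × Fin 2) ℝ) with hUdef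
  set p : Fin 2 × Fin 2 → ℝ := hrherm.eigenvalues with hpdef
  have hUorth : ∀ k l, ∑ j, U j k * U j l = if k = l then 1 else 0 := by
    intro k l
    have h := congrFun (congrFun ((Unitary.mem_iff.mp hrherm.eigenvectorUnitary.2).1) k) l
    rw [Matrix.mul_apply] at h
    simp only [Matrix.star_apply, star_trivial, Matrix.one_apply] at h
    exact h
  -- eigen-equation for columns
  have hcol : ∀ k, (fun j => U j k) = ⇑(hrherm.eigenvectorBasis k) := by
    intro k; funext j; rw [hUdef]; exact hrherm.eigenvectorUnitary_apply j k
  have heig : ∀ k, r *ᵥ (fun j => U j k) = fun j => p k * U j k := by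
    intro k
    rw [hcol k]
    rw [hrherm.mulVec_eigenvectorBasis k]
    funext j
    simp only [Pi.smul_apply, smul_eq_mul]
    rw [← congrFun (hcol k) j]
  -- quadratic forms with complexified eigenvectors
  have hquad : ∀ k, (star (fun j => ((U j k : ℝ) : ℂ))) ⬝ᵥ (C *ᵥ (fun j => ((U j k : ℝ) : ℂ)))
      = ((2 * p k : ℝ) : ℂ) := by
    intro k
    have hCv : C *ᵥ (fun j => ((U j k : ℝ) : ℂ)) = fun i => ((2 * (p k * U i k) : ℝ) : ℂ) := by
      funext i
      rw [hC]
      simp only [Matrix.mulVec, dotProduct, Matrix.smul_apply, Matrix.map_apply,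
        smul_eq_mul]
      have h2 : ∀ x : Fin 2 × Fin 2, (2:ℂ) * ((r i x : ℝ):ℂ) * ((U x k : ℝ):ℂ)
          = ((2 * (r i x * U x k) : ℝ):ℂ) := by
        intro x; push_cast; ring
      rw [Finset.sum_congr rfl (fun x _ => h2 x), ← Complex.ofReal_sum]
      have h3 : ∑ x, 2 * (r i x * U x k) = 2 * ((r *ᵥ fun j => U j k) i) := by
        rw [show (r *ᵥ fun j => U j k) i = ∑ x, r i x * U x k from rfl, Finset.mul_sum]
      rw [h3, heig k]
    rw [hCv]
    simp only [dotProduct, Pi.star_apply, RCLike.star_def, Complex.conj_ofReal]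
    have : ∑ i, ((U i k : ℝ):ℂ) * ((2 * (p k * U i k) : ℝ) : ℂ)
        = ((2 * p k : ℝ):ℂ) * ((∑ i, U i k * U i k : ℝ) : ℂ) := by
      push_cast
      rw [Finset.mul_sum]
      congr 1; funext i; ring
    rw [this]
    have h1 := hUorth k k
    rw [if_pos rfl] at h1
    rw [h1]
    simp
  have hp0 : ∀ k, 0 ≤ p k := by
    intro k
    have h := hCpsd.dotProduct_mulVec_nonneg (fun j => ((U j k : ℝ) : ℂ))
    rw [hquad k] at h
    have : (0:ℝ) ≤ 2 * p k := by
      rw [show (0:ℂ) = ((0:ℝ):ℂ) by norm_num] at h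
      exact_mod_cast h
    linarith
  have hp12 : ∀ k, p k ≤ 1/2 := by
    intro k
    have h := hDpsd.dotProduct_mulVec_nonneg (fun j => ((U j k : ℝ) : ℂ))
    have hDv : (star (fun j => ((U j k : ℝ) : ℂ))) ⬝ᵥ
        (((2:ℂ) • (1 : Matrix (Fin 2 × Fin 2) (Fin 2 × Fin 2) ℂ) - (2:ℂ) • C) *ᵥ
          (fun j => ((U j k : ℝ) : ℂ))) = ((2 - 4 * p k : ℝ) : ℂ) := by
      rw [Matrix.sub_mulVec]
      rw [dotProduct_sub]
      rw [hquad k |> fun hq => show (star (fun j => ((U j k : ℝ) : ℂ))) ⬝ᵥ (((2:ℂ) • C) *ᵥ _) = _ from by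
        rw [Matrix.smul_mulVec, dotProduct_smul, hq]]
      have h1 : (star (fun j => ((U j k : ℝ) : ℂ))) ⬝ᵥ
          (((2:ℂ) • (1 : Matrix (Fin 2 × Fin 2) (Fin 2 × Fin 2) ℂ)) *ᵥ (fun j => ((U j k : ℝ) : ℂ)))
          = ((2 : ℝ) : ℂ) := by
        rw [Matrix.smul_mulVec, dotProduct_smul, Matrix.one_mulVec]
        simp only [dotProduct, Pi.star_apply, RCLike.star_def, Complex.conj_ofReal]
        have : ∑ i, ((U i k : ℝ):ℂ) * ((U i k : ℝ) : ℂ) = ((∑ i, U i k * U i k : ℝ) : ℂ) := by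
          push_cast; rfl
        rw [this]
        have h1 := hUorth k k
        rw [if_pos rfl] at h1
        rw [h1]
        simp
      rw [h1]
      simp only [smul_eq_mul]
      push_cast
      ring
    rw [hDv] at h
    have : (0:ℝ) ≤ 2 - 4 * p k := by
      rw [show (0:ℂ) = ((0:ℝ):ℂ) by norm_num] at h
      exact_mod_cast h
    linarith
  have hpsum : ∑ k, p k = 1 := by
    have htrC : C.trace = 2 := by
      rw [hCdef, Matrix.trace_mul_cycle, magicN_mul_conjT]
      rw [Matrix.smul_mul, Matrix.one_mul, Matrix.trace_smul, hρ.2]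
      norm_num
    have h1 : r.trace = 1 := by
      have : r.trace = (∑ k, (C k k).re) / 2 := by
        simp [Matrix.trace, Matrix.diag, hrdef, Finset.sum_div]
      rw [this]
      have h2 : (∑ k, (C k k).re) = (C.trace).re := by
        simp [Matrix.trace, Matrix.diag, Complex.re_sum]
      rw [h2, htrC]
      norm_num
    rw [← sum_eigenvalues_eq_trace_real hrherm, h1]
  refine ⟨p, U, hp0, hp12, hpsum, hUorth, ?_⟩
  -- reconstruction
  have hrec : ρ = (1/4 : ℂ) • (magicN * C * (magicN)ᴴ) := by
    rw [hCdef]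
    rw [show magicN * (magicNᴴ * ρ * magicN) * magicNᴴ
        = (magicN * magicNᴴ) * ρ * (magicN * magicNᴴ) by
      simp only [Matrix.mul_assoc]]
    rw [magicN_mul_conjT]
    norm_num [Matrix.smul_mul, Matrix.mul_smul, smul_smul]
  have hspec : r = U * Matrix.diagonal p * star U := by
    have h := hrherm.spectral_theorem
    rw [Unitary.conjStarAlgAut_apply] at h
    have h2 : (RCLike.ofReal ∘ hrherm.eigenvalues : _ → ℝ) = p := by
      funext i; simp [RCLike.ofReal, hpdef]
    rw [h2] at h
    exact h
  have hmap : r.map Complex.ofReal = (U.map Complex.ofReal) *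
      Matrix.diagonal (fun k => (p k : ℂ)) * ((U.map Complex.ofReal))ᴴ := by
    rw [hspec]
    ext i j
    simp only [Matrix.map_apply, Matrix.mul_apply, Matrix.conjTranspose_apply,
      Matrix.diagonal_apply, Matrix.star_apply, star_trivial, RCLike.star_def,
      Complex.conj_ofReal, Finset.sum_mul]
    push_cast
    refine Finset.sum_congr rfl fun a _ => ?_
    refine Finset.sum_congr rfl fun b _ => ?_
    by_cases hab : b = a <;> simp [hab]
  rw [hrec, hC, hmap]
  rw [Matrix.mul_smul, Matrix.smul_mul, smul_smul]
  norm_num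
  simp only [Matrix.mul_assoc]

end Spectral
section ProdVec

lemma prod_state_of_conc_zero (v : Fin 2 × Fin 2 → ℂ)
    (hnorm : ∑ q, v q * starRingEnd ℂ (v q) = 1)
    (hconc : v (0,0) * v (1,1) = v (0,1) * v (1,0)) :
    ∃ A B : Matrix (Fin 2) (Fin 2) ℂ, IsDensityOp A ∧ IsDensityOp B ∧ outer v = A ⊗ₖ B := by
  classical
  have hex : ∃ s, v s ≠ 0 := by
    by_contra hall
    push_neg at hall
    rw [Finset.sum_eq_zero (fun q _ => by rw [hall q]; simp)] at hnorm
    exact one_ne_zero hnorm.symm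
  obtain ⟨⟨i₀, j₀⟩, hv0⟩ := hex
  set a : Fin 2 → ℂ := fun i => v (i, j₀) with hadef
  set b : Fin 2 → ℂ := fun j => v (i₀, j) / v (i₀, j₀) with hbdef
  have key0 : ∀ i j, v (i,j) * v (i₀,j₀) = v (i,j₀) * v (i₀,j) := by
    intro i j
    by_cases hi : i = i₀
    · subst hi; ring
    · by_cases hj : j = j₀
      · subst hj; ring
      · have hi2 : ∀ x y : Fin 2, x ≠ y → (x = 0 ∧ y = 1) ∨ (x = 1 ∧ y = 0) := by decide
        rcases hi2 i i₀ hi with ⟨h1,h2⟩|⟨h1,h2⟩ <;> rcases hi2 j j₀ hj with ⟨h3,h4⟩|⟨h3,h4⟩ <;>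
          subst h1 <;> subst h2 <;> subst h3 <;> subst h4 <;>
          first
            | linear_combination hconc
            | linear_combination -hconc
  have key : ∀ i j, v (i,j) = a i * b j := by
    intro i j
    rw [hadef, hbdef]
    simp only []
    field_simp
    linear_combination key0 i j
  set na : ℝ := ∑ i, Complex.normSq (a i) with hnadef
  set nb : ℝ := ∑ j, Complex.normSq (b j) with hnbdef
  have hna0 : 0 ≤ na := Finset.sum_nonneg fun i _ => Complex.normSq_nonneg _
  have hnb0 : 0 ≤ nb := Finset.sum_nonneg fun i _ => Complex.normSq_nonneg _
  have hprod : na * nb = 1 := by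
    have h1 : ((na * nb : ℝ) : ℂ) = 1 := by
      rw [← hnorm]
      have e : ∀ q : Fin 2 × Fin 2, v q * starRingEnd ℂ (v q)
          = ((Complex.normSq (v q) : ℝ) : ℂ) := fun q => Complex.mul_conj (v q)
      rw [Finset.sum_congr rfl (fun q _ => e q), ← Complex.ofReal_sum]
      congr 1
      rw [Fintype.sum_prod_type, hnadef, hnbdef, Finset.sum_mul_sum]
      refine Finset.sum_congr rfl fun i _ => Finset.sum_congr rfl fun j _ => ?_
      rw [key i j, Complex.normSq_mul]
    exact_mod_cast h1
  have hna : na ≠ 0 := fun h => by rw [h, zero_mul] at hprod; exact one_ne_zero hprod.symm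
  have hnb : nb ≠ 0 := fun h => by rw [h, mul_zero] at hprod; exact one_ne_zero hprod.symm
  have htr : ∀ (c : Fin 2 → ℂ), (outer c).trace = ((∑ i, Complex.normSq (c i) : ℝ) : ℂ) := by
    intro c
    rw [trace_outer]
    push_cast
    refine Finset.sum_congr rfl fun i _ => Complex.mul_conj (c i)
  refine ⟨((na⁻¹ : ℝ) : ℂ) • outer a, ((nb⁻¹ : ℝ) : ℂ) • outer b, ⟨?_, ?_⟩, ⟨?_, ?_⟩, ?_⟩
  · exact posSemidef_real_smul (by positivity) (outer_posSemidef a)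
  · rw [Matrix.trace_smul, htr a, ← hnadef, smul_eq_mul, ← Complex.ofReal_mul,
      inv_mul_cancel₀ hna, Complex.ofReal_one]
  · exact posSemidef_real_smul (by positivity) (outer_posSemidef b)
  · rw [Matrix.trace_smul, htr b, ← hnbdef, smul_eq_mul, ← Complex.ofReal_mul,
      inv_mul_cancel₀ hnb, Complex.ofReal_one]
  · ext ⟨i, j⟩ ⟨k, l⟩
    simp only [outer, Matrix.kroneckerMap_apply, Matrix.smul_apply, smul_eq_mul]
    rw [key i j, key k l]
    have hscal : ((na⁻¹ : ℝ) : ℂ) * ((nb⁻¹ : ℝ) : ℂ) = 1 := by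
      rw [← Complex.ofReal_mul, ← mul_inv, hprod]
      norm_num
    calc a i * b j * starRingEnd ℂ (a k * b l)
        = (a i * starRingEnd ℂ (a k)) * (b j * starRingEnd ℂ (b l)) := by
          rw [_root_.map_mul]; ring
      _ = ((na⁻¹ : ℝ) : ℂ) * (a i * starRingEnd ℂ (a k)) *
          (((nb⁻¹ : ℝ) : ℂ) * (b j * starRingEnd ℂ (b l))) := by
          rw [show ∀ x y : ℂ, ((na⁻¹ : ℝ) : ℂ) * x * (((nb⁻¹ : ℝ) : ℂ) * y)
              = (((na⁻¹ : ℝ) : ℂ) * ((nb⁻¹ : ℝ) : ℂ)) * (x * y) from fun x y => by ring,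
            hscal, one_mul]

end ProdVec
section Oct

def atomQ (u v : Fin 2 × Fin 2) (w : ℝ) : (Fin 2 × Fin 2) → (Fin 2 × Fin 2) → ℝ :=
  fun x y => (if x = u ∧ y = v then w else 0) + (if x = v ∧ y = u then w else 0)

lemma atomQ_symm (u v : Fin 2 × Fin 2) (w : ℝ) (x y : Fin 2 × Fin 2) :
    atomQ u v w x y = atomQ u v w y x := by
  unfold atomQ
  rw [add_comm]
  congr 1
  · exact if_congr and_comm rfl rfl
  · exact if_congr and_comm rfl rfl

lemma atomQ_diag (u v : Fin 2 × Fin 2) (w : ℝ) (huv : u ≠ v) (x : Fin 2 × Fin 2) :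
    atomQ u v w x x = 0 := by
  unfold atomQ
  have c1 : ¬ (x = u ∧ x = v) := fun h => huv (h.1.symm.trans h.2)
  have c2 : ¬ (x = v ∧ x = u) := fun h => huv (h.2.symm.trans h.1)
  simp [c1, c2]

lemma atomQ_nonneg (u v : Fin 2 × Fin 2) (w : ℝ) (hw : 0 ≤ w) (x y : Fin 2 × Fin 2) :
    0 ≤ atomQ u v w x y := by
  unfold atomQ
  apply add_nonneg <;> split <;> simp [hw]

lemma atomQ_row (u v : Fin 2 × Fin 2) (w : ℝ) (huv : u ≠ v) (x : Fin 2 × Fin 2) :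
    ∑ y, atomQ u v w x y = (if x = u then w else 0) + (if x = v then w else 0) := by
  unfold atomQ
  rw [Finset.sum_add_distrib]
  congr 1
  · by_cases h1 : x = u
    · simp [h1]
    · simp [h1]
  · by_cases h2 : x = v
    · simp [h2]
    · simp [h2]

lemma oct_helper (d : (Fin 2 × Fin 2) → ℝ) (i j k l : Fin 2 × Fin 2)
    (hcov : ∀ x : Fin 2 × Fin 2, x = i ∨ x = j ∨ x = k ∨ x = l)
    (hij : i ≠ j) (hik : i ≠ k) (hil : i ≠ l) (hjk : j ≠ k) (hjl : j ≠ l) (hkl : k ≠ l)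
    (h0 : ∀ x, 0 ≤ d x) (h1 : ∀ x, d x ≤ 1)
    (hsum : d i + d j + d k + d l = 2)
    (hA : 1 ≤ d i + d l) (hB : d j + d l ≤ 1) :
    ∃ q : (Fin 2 × Fin 2) → (Fin 2 × Fin 2) → ℝ,
      (∀ x y, q x y = q y x) ∧ (∀ x, q x x = 0) ∧ (∀ x y, 0 ≤ q x y) ∧
      (∀ x, ∑ y, q x y = d x) := by
  refine ⟨fun x y => atomQ i j (d j) x y + atomQ k l (1 - d i) x y
    + atomQ i k (1 - d j - d l) x y + atomQ i l (d i + d l - 1) x y, ?_, ?_, ?_, ?_⟩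
  · intro x y
    dsimp only
    rw [atomQ_symm i j _ x y, atomQ_symm k l _ x y, atomQ_symm i k _ x y, atomQ_symm i l _ x y]
  · intro x
    dsimp only
    rw [atomQ_diag i j _ hij, atomQ_diag k l _ hkl, atomQ_diag i k _ hik, atomQ_diag i l _ hil]
    ring
  · intro x y
    dsimp only
    have n1 := atomQ_nonneg i j (d j) (h0 j) x y
    have n2 := atomQ_nonneg k l (1 - d i) (by linarith [h1 i]) x y
    have n3 := atomQ_nonneg i k (1 - d j - d l) (by linarith) x y
    have n4 := atomQ_nonneg i l (d i + d l - 1) (by linarith) x y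
    linarith
  · intro x
    dsimp only
    simp only [Finset.sum_add_distrib]
    rw [atomQ_row i j _ hij, atomQ_row k l _ hkl, atomQ_row i k _ hik, atomQ_row i l _ hil]
    rcases hcov x with rfl | rfl | rfl | rfl
    · simp [hij, hik, hil]
      try ring
    · simp [Ne.symm hij, hjk, hjl]
    · simp [Ne.symm hik, Ne.symm hjk, hkl]
      try linarith
    · simp [Ne.symm hil, Ne.symm hjl, Ne.symm hkl]
      try linarith

lemma oct (p : Fin 2 × Fin 2 → ℝ) (h0 : ∀ x, 0 ≤ p x) (h12 : ∀ x, p x ≤ 1/2)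
    (hsum : ∑ x, p x = 1) :
    ∃ q : (Fin 2 × Fin 2) → (Fin 2 × Fin 2) → ℝ,
      (∀ x y, q x y = q y x) ∧ (∀ x, q x x = 0) ∧ (∀ x y, 0 ≤ q x y) ∧
      (∀ x, ∑ y, q x y = 2 * p x) := by
  set d : Fin 2 × Fin 2 → ℝ := fun x => 2 * p x with hd
  have hsd : d (0,0) + d (0,1) + d (1,0) + d (1,1) = 2 := by
    simp only [Fintype.sum_prod_type, Fin.sum_univ_two] at hsum
    simp only [hd]
    linarith
  have h0d : ∀ x, 0 ≤ d x := fun x => by simp only [hd]; linarith [h0 x]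
  have h1d : ∀ x, d x ≤ 1 := fun x => by simp only [hd]; linarith [h12 x]
  have main : ∃ q : (Fin 2 × Fin 2) → (Fin 2 × Fin 2) → ℝ,
      (∀ x y, q x y = q y x) ∧ (∀ x, q x x = 0) ∧ (∀ x y, 0 ≤ q x y) ∧
      (∀ x, ∑ y, q x y = d x) := by
    rcases le_total (d (0,0)) (d (0,1)) with h1 | h1 <;>
    rcases le_total (d (1,0)) (d (1,1)) with h2 | h2 <;>
    rcases le_total (d (0,0) + d (0,1)) (d (1,0) + d (1,1)) with h3 | h3
    · exact oct_helper d (1,1) (0,0) (0,1) (1,0) (by decide) (by decide) (by decide) (by decide)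
        (by decide) (by decide) (by decide) h0d h1d (by linarith) (by linarith) (by linarith)
    · exact oct_helper d (0,1) (1,0) (1,1) (0,0) (by decide) (by decide) (by decide) (by decide)
        (by decide) (by decide) (by decide) h0d h1d (by linarith) (by linarith) (by linarith)
    · exact oct_helper d (1,0) (0,0) (0,1) (1,1) (by decide) (by decide) (by decide) (by decide)
        (by decide) (by decide) (by decide) h0d h1d (by linarith) (by linarith) (by linarith)
    · exact oct_helper d (0,1) (1,1) (1,0) (0,0) (by decide) (by decide) (by decide) (by decide)
        (by decide) (by decide) (by decide) h0d h1d (by linarith) (by linarith) (by linarith)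
    · exact oct_helper d (1,1) (0,1) (0,0) (1,0) (by decide) (by decide) (by decide) (by decide)
        (by decide) (by decide) (by decide) h0d h1d (by linarith) (by linarith) (by linarith)
    · exact oct_helper d (0,0) (1,0) (1,1) (0,1) (by decide) (by decide) (by decide) (by decide)
        (by decide) (by decide) (by decide) h0d h1d (by linarith) (by linarith) (by linarith)
    · exact oct_helper d (1,0) (0,1) (0,0) (1,1) (by decide) (by decide) (by decide) (by decide)
        (by decide) (by decide) (by decide) h0d h1d (by linarith) (by linarith) (by linarith)
    · exact oct_helper d (0,0) (1,1) (1,0) (0,1) (by decide) (by decide) (by decide) (by decide)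
        (by decide) (by decide) (by decide) h0d h1d (by linarith) (by linarith) (by linarith)
  obtain ⟨q, hq1, hq2, hq3, hq4⟩ := main
  exact ⟨q, hq1, hq2, hq3, fun x => by rw [hq4 x]⟩

end Oct
section Assembly

lemma dummy_density : IsDensityOp (((1/2 : ℝ) : ℂ) • (1 : Matrix (Fin 2) (Fin 2) ℂ)) := by
  constructor
  · exact posSemidef_real_smul (by norm_num) Matrix.PosSemidef.one
  · rw [Matrix.trace_smul, Matrix.trace_one]
    simp

lemma scalar_norm (a b : ℂ) :
    ((a + Complex.I * b)/2) * starRingEnd ℂ ((a + Complex.I * b)/2)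
      = (1/4 : ℂ) * ((a * starRingEnd ℂ a) + (b * starRingEnd ℂ b)
          + Complex.I * (b * starRingEnd ℂ a) - Complex.I * (a * starRingEnd ℂ b)) := by
  simp only [map_div₀, map_add, _root_.map_mul, Complex.conj_I, map_ofNat]
  linear_combination (-(b * (starRingEnd ℂ b))/4) * Complex.I_mul_I

lemma scalar_pair (a b a' b' : ℂ) :
    ((a + Complex.I * b)/2) * starRingEnd ℂ ((a' + Complex.I * b')/2)
      + ((b + Complex.I * a)/2) * starRingEnd ℂ ((b' + Complex.I * a')/2)
      = ((a * starRingEnd ℂ a') + (b * starRingEnd ℂ b'))/2 := by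
  simp only [map_div₀, map_add, _root_.map_mul, Complex.conj_I, map_ofNat]
  linear_combination (-(a * (starRingEnd ℂ a') + b * (starRingEnd ℂ b'))/4) * Complex.I_mul_I

lemma CAO_imp_sep (ρ : Matrix (Fin 2 × Fin 2) (Fin 2 × Fin 2) ℂ) (hρ : IsDensityOp ρ)
    (hA : ptrB ρ = (1/2 : ℂ) • (1 : Matrix (Fin 2) (Fin 2) ℂ))
    (hB : ptrA ρ = (1/2 : ℂ) • (1 : Matrix (Fin 2) (Fin 2) ℂ))
    (hCAO : ((1 : Matrix (Fin 2 × Fin 2) (Fin 2 × Fin 2) ℂ) - (2 : ℂ) • ρ).PosSemidef) :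
    IsSepState ρ := by
  classical
  obtain ⟨p, U, hp0, hp12, hpsum, hUorth, hρeq⟩ := spectral_package ρ hρ hA hB hCAO
  set V : Matrix (Fin 2 × Fin 2) (Fin 2 × Fin 2) ℂ := magicN * U.map Complex.ofReal with hVdef
  -- entry formula for V
  have hVent : ∀ i k, V i k = ∑ j, magicN i j * ((U j k : ℝ) : ℂ) := by
    intro i k
    rw [hVdef]
    simp [Matrix.mul_apply, Matrix.map_apply]
  -- orthogonality of columns of V
  have hVV : Vᴴ * V = (2:ℂ) • 1 := by
    rw [hVdef, Matrix.conjTranspose_mul]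
    rw [show (U.map Complex.ofReal)ᴴ * (magicN)ᴴ * (magicN * U.map Complex.ofReal)
        = (U.map Complex.ofReal)ᴴ * ((magicN)ᴴ * magicN) * U.map Complex.ofReal by
      simp only [Matrix.mul_assoc]]
    rw [magicN_conjT_mul, Matrix.mul_smul, Matrix.smul_mul, Matrix.mul_one]
    congr 1
    ext k l
    simp only [Matrix.mul_apply, Matrix.conjTranspose_apply, Matrix.map_apply,
      RCLike.star_def, Complex.conj_ofReal, Matrix.one_apply]
    rw [show ∑ j, ((U j k : ℝ):ℂ) * ((U j l : ℝ):ℂ) = ((∑ j, U j k * U j l : ℝ) : ℂ) by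
      push_cast; rfl]
    rw [hUorth k l]
    by_cases hkl : k = l <;> simp [hkl]
  have hVo : ∀ k l, ∑ i, starRingEnd ℂ (V i k) * V i l = if k = l then 2 else 0 := by
    intro k l
    have h := congrFun (congrFun hVV k) l
    rw [Matrix.mul_apply] at h
    simp only [Matrix.conjTranspose_apply, RCLike.star_def, Matrix.smul_apply,
      Matrix.one_apply, smul_eq_mul] at h
    rw [h]
    by_cases hkl : k = l <;> simp [hkl]
  have hVo' : ∀ k l, ∑ i, V i l * starRingEnd ℂ (V i k) = if k = l then 2 else 0 := by
    intro k l
    rw [← hVo k l]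
    exact Finset.sum_congr rfl fun i _ => mul_comm _ _
  -- entry formula for ρ
  have hρent : ∀ i i', ρ i i' = ∑ k, (p k : ℂ) * (V i k * starRingEnd ℂ (V i' k)) / 2 := by
    intro i i'
    rw [hρeq]
    simp only [Matrix.smul_apply, smul_eq_mul]
    have h1 : ∀ k, ((V * Matrix.diagonal fun k => (p k : ℂ))) i k = V i k * (p k : ℂ) :=
      fun k => Matrix.mul_diagonal _ _ _ _
    rw [Matrix.mul_apply, Finset.mul_sum]
    refine Finset.sum_congr rfl fun k _ => ?_
    rw [h1 k, Matrix.conjTranspose_apply]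
    simp only [RCLike.star_def]
    ring
  -- the product candidate vectors
  set α : (Fin 2 × Fin 2) → (Fin 2 × Fin 2) → (Fin 2 × Fin 2) → ℂ :=
    fun k l i => (V i k + Complex.I * V i l) / 2 with hαdef
  -- norm one
  have hαnorm : ∀ k l, ∑ q, α k l q * starRingEnd ℂ (α k l q) = 1 := by
    intro k l
    have expand : ∀ i, α k l i * starRingEnd ℂ (α k l i)
        = (1/4 : ℂ) * ((V i k * starRingEnd ℂ (V i k)) + (V i l * starRingEnd ℂ (V i l))
          + Complex.I * (V i l * starRingEnd ℂ (V i k))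
          - Complex.I * (V i k * starRingEnd ℂ (V i l))) := by
      intro i
      rw [hαdef]
      exact scalar_norm (V i k) (V i l)
    rw [Finset.sum_congr rfl (fun i _ => expand i)]
    rw [← Finset.mul_sum]
    have hsplit : ∑ i, ((V i k * starRingEnd ℂ (V i k)) + (V i l * starRingEnd ℂ (V i l))
          + Complex.I * (V i l * starRingEnd ℂ (V i k))
          - Complex.I * (V i k * starRingEnd ℂ (V i l)))
        = (∑ i, V i k * starRingEnd ℂ (V i k)) + (∑ i, V i l * starRingEnd ℂ (V i l))
          + Complex.I * (∑ i, V i l * starRingEnd ℂ (V i k))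
          - Complex.I * (∑ i, V i k * starRingEnd ℂ (V i l)) := by
      rw [Finset.mul_sum, Finset.mul_sum, ← Finset.sum_add_distrib, ← Finset.sum_add_distrib,
        ← Finset.sum_sub_distrib]
    rw [hsplit, hVo' k k, hVo' l l, hVo' k l, hVo' l k]
    by_cases hkl : k = l
    · subst hkl; simp; norm_num
    · have h1 : ¬ (l = k) := fun h => hkl h.symm
      simp [hkl, h1]
      norm_num
  -- concurrence zero for k ≠ l
  have hαconc : ∀ k l, k ≠ l →
      α k l (0,0) * α k l (1,1) = α k l (0,1) * α k l (1,0) := by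
    intro k l hkl
    set μ : (Fin 2 × Fin 2) → ℂ := fun j => ((U j k : ℝ):ℂ) + Complex.I * ((U j l : ℝ):ℂ)
      with hμdef
    have hαv : ∀ i, α k l i = (magicN *ᵥ μ) i / 2 := by
      intro i
      rw [hαdef]
      simp only []
      rw [hVent i k, hVent i l]
      rw [show (magicN *ᵥ μ) i = ∑ j, magicN i j * μ j from rfl]
      rw [hμdef]
      simp only []
      rw [Finset.mul_sum, ← Finset.sum_add_distrib]
      congr 1
      refine Finset.sum_congr rfl fun j _ => ?_
      ring
    have hμsq : ∑ j, μ j ^ 2 = 0 := by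
      rw [hμdef]
      simp only []
      have e : ∀ j : Fin 2 × Fin 2, (((U j k : ℝ):ℂ) + Complex.I * ((U j l : ℝ):ℂ)) ^ 2
          = (((U j k * U j k : ℝ)):ℂ) - (((U j l * U j l : ℝ)):ℂ)
            + (2 * Complex.I) * (((U j k * U j l : ℝ)):ℂ) := by
        intro j
        push_cast
        have hI : Complex.I ^ 2 = -1 := Complex.I_sq
        ring_nf
        rw [hI]
        ring
      rw [Finset.sum_congr rfl (fun j _ => e j)]
      rw [Finset.sum_add_distrib, Finset.sum_sub_distrib, ← Finset.mul_sum]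
      rw [← Complex.ofReal_sum, ← Complex.ofReal_sum, ← Complex.ofReal_sum]
      rw [hUorth k k, hUorth l l, hUorth k l]
      simp [hkl]
    have hquad := magicN_quad μ
    rw [hμsq] at hquad
    rw [hαv (0,0), hαv (1,1), hαv (0,1), hαv (1,0)]
    field_simp
    linear_combination hquad
  -- octahedron decomposition of the weights
  obtain ⟨q, hqsymm, hqdiag, hqpos, hqrow⟩ := oct p hp0 hp12 hpsum
  have hqrowC : ∀ k, ∑ l, ((q k l : ℝ) : ℂ) = ((2 * p k : ℝ) : ℂ) := by
    intro k
    rw [← Complex.ofReal_sum]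
    exact congrArg _ (hqrow k)
  have hqcolC : ∀ l, ∑ k, ((q k l : ℝ) : ℂ) = ((2 * p l : ℝ) : ℂ) := by
    intro l
    rw [← Complex.ofReal_sum]
    congr 1
    rw [Finset.sum_congr rfl (fun k _ => hqsymm k l), hqrow l]
  -- the key entrywise identity
  have hmain : ∀ i i', ∑ s : (Fin 2 × Fin 2) × (Fin 2 × Fin 2),
      ((q s.1 s.2 / 2 : ℝ) : ℂ) * (α s.1 s.2 i * starRingEnd ℂ (α s.1 s.2 i')) = ρ i i' := by
    intro i i'
    rw [Fintype.sum_prod_type]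
    set A : (Fin 2 × Fin 2) → ℂ := fun k => V i k * starRingEnd ℂ (V i' k) with hAdef
    set c : (Fin 2 × Fin 2) → (Fin 2 × Fin 2) → ℂ :=
      fun k l => ((q k l / 2 : ℝ) : ℂ) * (α k l i * starRingEnd ℂ (α k l i')) with hcdef
    have pair : ∀ k l, α k l i * starRingEnd ℂ (α k l i') + α l k i * starRingEnd ℂ (α l k i')
        = (A k + A l) / 2 := by
      intro k l
      rw [hαdef, hAdef]
      exact scalar_pair (V i k) (V i l) (V i' k) (V i' l)
    have hcc : ∀ k l, c k l + c l k = ((q k l : ℝ) : ℂ) * (A k + A l) / 4 := by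
      intro k l
      rw [hcdef]
      simp only []
      rw [hqsymm l k]
      rw [← mul_add, pair k l]
      push_cast
      ring
    have hswap : ∑ k, ∑ l, c k l = ∑ l, ∑ k, c k l := Finset.sum_comm
    have h2S : (∑ k, ∑ l, c k l) + (∑ k, ∑ l, c k l) = ∑ k, (p k : ℂ) * A k := by
      nth_rewrite 2 [hswap]
      rw [← Finset.sum_add_distrib]
      have step1 : ∀ k, (∑ l, c k l) + (∑ l, c l k) = ∑ l, ((q k l : ℝ):ℂ) * (A k + A l) / 4 := by
        intro k
        rw [← Finset.sum_add_distrib]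
        exact Finset.sum_congr rfl fun l _ => hcc k l
      rw [Finset.sum_congr rfl fun k _ => step1 k]
      have step2 : ∀ k, ∑ l, ((q k l : ℝ):ℂ) * (A k + A l) / 4
          = ((2 * p k : ℝ):ℂ) * A k / 4 + (∑ l, ((q k l : ℝ):ℂ) * A l / 4) := by
        intro k
        simp only [show ∀ l, ((q k l : ℝ):ℂ) * (A k + A l) / 4
            = ((q k l : ℝ):ℂ) * A k / 4 + ((q k l : ℝ):ℂ) * A l / 4 from fun l => by ring]
        rw [Finset.sum_add_distrib]
        congr 1
        simp only [show ∀ l, ((q k l : ℝ):ℂ) * A k / 4 = ((q k l : ℝ):ℂ) * (A k / 4) from fun l => by ring]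
        rw [← Finset.sum_mul]
        rw [hqrowC k]
        ring
      rw [Finset.sum_congr rfl fun k _ => step2 k]
      rw [Finset.sum_add_distrib]
      have step3 : ∑ k, ∑ l, ((q k l : ℝ):ℂ) * A l / 4 = ∑ l, ((2 * p l : ℝ):ℂ) * A l / 4 := by
        rw [Finset.sum_comm]
        refine Finset.sum_congr rfl fun l _ => ?_
        simp only [show ∀ k, ((q k l : ℝ):ℂ) * A l / 4 = ((q k l : ℝ):ℂ) * (A l / 4) from fun k => by ring]
        rw [← Finset.sum_mul, hqcolC l]
        ring
      rw [step3]
      rw [← Finset.sum_add_distrib]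
      refine Finset.sum_congr rfl fun k _ => ?_
      push_cast
      ring
    have hS : ∑ k, ∑ l, c k l = (∑ k, (p k : ℂ) * A k) / 2 := by
      have h := h2S
      field_simp
      try linear_combination h
    rw [show (∑ k, ∑ l, ((q k l / 2 : ℝ) : ℂ) * (α k l i * starRingEnd ℂ (α k l i')))
        = ∑ k, ∑ l, c k l from rfl]
    rw [hS, hρent i i']
    rw [Finset.sum_div]
    try exact Finset.sum_congr rfl fun k _ => by rw [hAdef]
  -- choose product decompositions
  have hex : ∀ s : (Fin 2 × Fin 2) × (Fin 2 × Fin 2),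
      ∃ AB : Matrix (Fin 2) (Fin 2) ℂ × Matrix (Fin 2) (Fin 2) ℂ,
        IsDensityOp AB.1 ∧ IsDensityOp AB.2 ∧
          (s.1 ≠ s.2 → outer (α s.1 s.2) = AB.1 ⊗ₖ AB.2) := by
    intro s
    by_cases hs : s.1 = s.2
    · exact ⟨(((1/2 : ℝ) : ℂ) • 1, ((1/2 : ℝ) : ℂ) • 1), dummy_density, dummy_density,
        fun h => absurd hs h⟩
    · obtain ⟨A, B, hdA, hdB, hAB⟩ := prod_state_of_conc_zero (α s.1 s.2)
        (hαnorm s.1 s.2) (by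
          have := hαconc s.1 s.2 hs
          linear_combination this)
      exact ⟨(A, B), hdA, hdB, fun _ => hAB⟩
  choose AB hd1 hd2 hd3 using hex
  -- the enumeration
  let g : Fin 4 ≃ (Fin 2 × Fin 2) := (finProdFinEquiv (m := 2) (n := 2)).symm
  let e : Fin 16 ≃ ((Fin 2 × Fin 2) × (Fin 2 × Fin 2)) :=
    (finProdFinEquiv (m := 4) (n := 4)).symm.trans (Equiv.prodCongr g g)
  refine ⟨16, fun m => q (e m).1 (e m).2 / 2, fun m => (AB (e m)).1, fun m => (AB (e m)).2,
    ?_, ?_, fun m => hd1 (e m), fun m => hd2 (e m), ?_⟩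
  · intro m
    have := hqpos (e m).1 (e m).2
    linarith
  · rw [Equiv.sum_comp e (fun s => q s.1 s.2 / 2)]
    rw [Fintype.sum_prod_type]
    have : ∀ k, ∑ l, q k l / 2 = p k := by
      intro k
      rw [← Finset.sum_div, hqrow k]
      ring
    rw [Finset.sum_congr rfl fun k _ => this k]
    exact hpsum
  · rw [Equiv.sum_comp e (fun s => ((q s.1 s.2 / 2 : ℝ) : ℂ) • ((AB s).1 ⊗ₖ (AB s).2))]
    ext i i'
    rw [Matrix.sum_apply]
    rw [← hmain i i']
    refine Finset.sum_congr rfl fun s _ => ?_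
    by_cases hs : s.1 = s.2
    · rw [show q s.1 s.2 = 0 from by rw [hs]; exact hqdiag s.2]
      simp
    · rw [← hd3 s hs]
      simp only [Matrix.smul_apply, smul_eq_mul, outer]

end Assembly

/-- For Weyl states the Cerf–Adami criterion 2ρ ≤ I₄ is equivalent to separability. -/
theorem weyl_CAO_criterion_iff_separable
    (ρ : Matrix (Fin 2 × Fin 2) (Fin 2 × Fin 2) ℂ) (hρ : IsDensityOp ρ)
    (hA : ptrB ρ = (1/2 : ℂ) • (1 : Matrix (Fin 2) (Fin 2) ℂ))
    (hB : ptrA ρ = (1/2 : ℂ) • (1 : Matrix (Fin 2) (Fin 2) ℂ)) :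
    ((1 : Matrix (Fin 2 × Fin 2) (Fin 2 × Fin 2) ℂ) - (2 : ℂ) • ρ).PosSemidef ↔
      IsSepState ρ := by
  constructor
  · intro h
    exact CAO_imp_sep ρ hρ hA hB h
  · intro h
    exact sep_imp_CAO ρ hA hB h

end
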